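/- Let α ∈ (0,1) and define, for complex ω, ζ ∉ {0, αc, α/c, c, 1/c}, the quantities q(ω,ζ) = ζ(ω−c)(ω−1/c)/(ω(ζ−c)(ζ−1/c)) and q̃(ω,ζ) = ω(ζ−αc)(ζ−α/c)/(ζ(ω−αc)(ω−α/c)). Then for all such ω, ζ with ω⋆, ζ⋆ ∉ {0, αc, α/c, c}: q(ω⋆, ζ⋆)·q(ω,ζ) = 1 and q̃(ω⋆, ζ⋆) = q(ω,ζ)·q̃(ω,ζ). -/

import Mathlib

open Complex

noncomputable def cc (α : ℝ) : ℝ := Real.sqrt (α / (1 - α + α ^ 2))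
noncomputable def R1 (α : ℝ) : ℝ := (1 - α) / Real.sqrt α

/-- The star operation `ζ⋆ = 1/c + R₁²/(ζ − 1/c)`. -/
noncomputable def star (α : ℝ) (ζ : ℂ) : ℂ :=
  1 / (cc α : ℂ) + ((R1 α : ℝ) : ℂ) ^ 2 / (ζ - 1 / (cc α : ℂ))

/-- The function `q(ω, ζ)` from equation (6.2) of the paper. -/
noncomputable def qfun (α : ℝ) (ω ζ : ℂ) : ℂ :=
  ζ * (ω - (cc α : ℂ)) * (ω - 1 / (cc α : ℂ)) /
    (ω * (ζ - (cc α : ℂ)) * (ζ - 1 / (cc α : ℂ)))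

/-- The function `q̃(ω, ζ)` from equation (6.2) of the paper. -/
noncomputable def qtil (α : ℝ) (ω ζ : ℂ) : ℂ :=
  ω * (ζ - (α : ℂ) * (cc α : ℂ)) * (ζ - (α : ℂ) / (cc α : ℂ)) /
    (ζ * (ω - (α : ℂ) * (cc α : ℂ)) * (ω - (α : ℂ) / (cc α : ℂ)))

lemma aux_den_pos {α : ℝ} (hα0 : 0 < α) : 0 < 1 - α + α ^ 2 := by nlinarith

lemma aux_cc_pos {α : ℝ} (hα0 : 0 < α) : 0 < cc α :=
  Real.sqrt_pos.mpr (div_pos hα0 (aux_den_pos hα0))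

lemma aux_cc_sq {α : ℝ} (hα0 : 0 < α) : (cc α) ^ 2 * (1 - α + α ^ 2) = α := by
  have := aux_den_pos hα0
  rw [cc, Real.sq_sqrt (by positivity)]
  field_simp

lemma aux_R1_sq {α : ℝ} (hα0 : 0 < α) : (R1 α) ^ 2 * α = (1 - α) ^ 2 := by
  rw [R1, div_pow, Real.sq_sqrt hα0.le]
  field_simp

lemma aux_R1c_sq {α : ℝ} (hα0 : 0 < α) : (R1 α) ^ 2 * (cc α) ^ 2 = 1 - (cc α) ^ 2 := by
  have h1 := aux_cc_sq hα0
  have h2 := aux_R1_sq hα0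
  have h3 := aux_den_pos hα0
  have : (cc α) ^ 2 = α / (1 - α + α ^ 2) := by field_simp; linarith [h1]
  rw [this]
  field_simp
  nlinarith [h2]

lemma aux_cc_sq_lt_one {α : ℝ} (hα0 : 0 < α) (hα1 : α < 1) : (cc α) ^ 2 < 1 := by
  have h1 := aux_cc_sq hα0
  have h3 := aux_den_pos hα0
  nlinarith

lemma aux_star_eq {α : ℝ} {ζ : ℂ} (hα0 : 0 < α) (hB : (cc α : ℂ) * ζ - 1 ≠ 0) :
    star α ζ = (ζ - (cc α : ℂ)) / ((cc α : ℂ) * ζ - 1) := by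
  have hc0 : (cc α : ℂ) ≠ 0 := by exact_mod_cast (aux_cc_pos hα0).ne'
  have hden : ζ - 1 / (cc α : ℂ) ≠ 0 := by
    intro h
    apply hB
    have : ζ = 1 / (cc α : ℂ) := by linear_combination h
    rw [this]; field_simp; norm_num
  have hR : ((R1 α : ℝ) : ℂ) ^ 2 * ((cc α : ℂ)) ^ 2 = 1 - ((cc α : ℂ)) ^ 2 := by
    exact_mod_cast congrArg (Complex.ofReal) (aux_R1c_sq hα0)
  have hB'' : ζ * (cc α : ℂ) - 1 ≠ 0 := by intro h; exact hB (by linear_combination h)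
  unfold _root_.star
  field_simp [hB'']
  linear_combination hR

set_option maxHeartbeats 2000000 in
/-- Symmetries of `q` and `q̃` under the star operation. -/
theorem q_qtil_star_symmetry (α : ℝ) (hα0 : 0 < α) (hα1 : α < 1) (ω ζ : ℂ)
    (hω : ω ∉ ({0, (α : ℂ) * (cc α : ℂ), (α : ℂ) / (cc α : ℂ), ((cc α : ℂ)),
        1 / (cc α : ℂ)} : Set ℂ))
    (hζ : ζ ∉ ({0, (α : ℂ) * (cc α : ℂ), (α : ℂ) / (cc α : ℂ), ((cc α : ℂ)),
        1 / (cc α : ℂ)} : Set ℂ))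
    (hωs : star α ω ∉ ({0, (α : ℂ) * (cc α : ℂ), (α : ℂ) / (cc α : ℂ),
        ((cc α : ℂ))} : Set ℂ))
    (hζs : star α ζ ∉ ({0, (α : ℂ) * (cc α : ℂ), (α : ℂ) / (cc α : ℂ),
        ((cc α : ℂ))} : Set ℂ)) :
    qfun α (star α ω) (star α ζ) * qfun α ω ζ = 1 ∧
    qtil α (star α ω) (star α ζ) = qfun α ω ζ * qtil α ω ζ := by
  simp only [Set.mem_insert_iff, Set.mem_singleton_iff, not_or] at hω hζ
  obtain ⟨hω0, hω1, hω2, hω3, hω4⟩ := hω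
  obtain ⟨hζ0, hζ1, hζ2, hζ3, hζ4⟩ := hζ
  have hc0 : (cc α : ℂ) ≠ 0 := by exact_mod_cast (aux_cc_pos hα0).ne'
  have hαC : (α : ℂ) ≠ 0 := by exact_mod_cast hα0.ne'
  have h1α : (1 : ℂ) - (α : ℂ) ≠ 0 := by
    intro h; have : (α : ℂ) = 1 := by linear_combination -h
    exact (by norm_num [hα1.ne] : α ≠ 1) (by exact_mod_cast this)
  have hdenC : (1 : ℂ) - (α : ℂ) + (α : ℂ) ^ 2 ≠ 0 := by
    have : ((1 - α + α ^ 2 : ℝ) : ℂ) ≠ 0 := by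
      exact_mod_cast (aux_den_pos hα0).ne'
    push_cast at this; exact this
  have hc2 : ((cc α : ℂ)) ^ 2 * (1 - (α : ℂ) + (α : ℂ) ^ 2) = (α : ℂ) := by
    have := congrArg (Complex.ofReal) (aux_cc_sq hα0)
    push_cast at this; exact this
  have h1c2 : (1 : ℂ) - ((cc α : ℂ)) ^ 2 ≠ 0 := by
    have hlt := aux_cc_sq_lt_one hα0 hα1
    intro h
    have : ((cc α) ^ 2 : ℂ) = ((1 : ℝ) : ℂ) := by push_cast; linear_combination -h
    have : (cc α) ^ 2 = 1 := by exact_mod_cast this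
    linarith
  -- nonvanishing of Möbius denominators
  have hA : (cc α : ℂ) * ω - 1 ≠ 0 := by
    intro h; apply hω4
    field_simp
    linear_combination h
  have hB : (cc α : ℂ) * ζ - 1 ≠ 0 := by
    intro h; apply hζ4
    field_simp
    linear_combination h
  have hA' : ω * (cc α : ℂ) - 1 ≠ 0 := by intro h; exact hA (by linear_combination h)
  have hB' : ζ * (cc α : ℂ) - 1 ≠ 0 := by intro h; exact hB (by linear_combination h)
  have sω := aux_star_eq hα0 hA
  have sζ := aux_star_eq hα0 hB
  -- simple differences
  have hωc : ω - (cc α : ℂ) ≠ 0 := sub_ne_zero.mpr hω3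
  have hζc : ζ - (cc α : ℂ) ≠ 0 := sub_ne_zero.mpr hζ3
  have hωic : ω - 1 / (cc α : ℂ) ≠ 0 := sub_ne_zero.mpr hω4
  have hζic : ζ - 1 / (cc α : ℂ) ≠ 0 := sub_ne_zero.mpr hζ4
  have hωαc : ω - (α : ℂ) * (cc α : ℂ) ≠ 0 := sub_ne_zero.mpr hω1
  have hζαc : ζ - (α : ℂ) * (cc α : ℂ) ≠ 0 := sub_ne_zero.mpr hζ1
  have hωαic : ω - (α : ℂ) / (cc α : ℂ) ≠ 0 := sub_ne_zero.mpr hω2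
  have hζαic : ζ - (α : ℂ) / (cc α : ℂ) ≠ 0 := sub_ne_zero.mpr hζ2
  -- factorizations of the shifted star
  have e1ω : (ω - (cc α : ℂ)) / ((cc α : ℂ) * ω - 1) - (cc α : ℂ)
      = ω * (1 - ((cc α : ℂ)) ^ 2) / ((cc α : ℂ) * ω - 1) := by
    field_simp
    ring
  have e1ζ : (ζ - (cc α : ℂ)) / ((cc α : ℂ) * ζ - 1) - (cc α : ℂ)
      = ζ * (1 - ((cc α : ℂ)) ^ 2) / ((cc α : ℂ) * ζ - 1) := by
    field_simp
    ring
  have e2ω : (ω - (cc α : ℂ)) / ((cc α : ℂ) * ω - 1) - 1 / (cc α : ℂ)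
      = (1 - ((cc α : ℂ)) ^ 2) / ((cc α : ℂ) * ((cc α : ℂ) * ω - 1)) := by
    field_simp
    ring
  have e2ζ : (ζ - (cc α : ℂ)) / ((cc α : ℂ) * ζ - 1) - 1 / (cc α : ℂ)
      = (1 - ((cc α : ℂ)) ^ 2) / ((cc α : ℂ) * ((cc α : ℂ) * ζ - 1)) := by
    field_simp
    ring
  have e3ω : (ω - (cc α : ℂ)) / ((cc α : ℂ) * ω - 1) - (α : ℂ) * (cc α : ℂ)
      = (1 - (α : ℂ)) * (ω - (α : ℂ) / (cc α : ℂ))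
          / ((1 - (α : ℂ) + (α : ℂ) ^ 2) * ((cc α : ℂ) * ω - 1)) := by
    field_simp
    linear_combination ((α:ℂ) - 1 - (cc α : ℂ) * (α:ℂ) * ω) * hc2
  have e3ζ : (ζ - (cc α : ℂ)) / ((cc α : ℂ) * ζ - 1) - (α : ℂ) * (cc α : ℂ)
      = (1 - (α : ℂ)) * (ζ - (α : ℂ) / (cc α : ℂ))
          / ((1 - (α : ℂ) + (α : ℂ) ^ 2) * ((cc α : ℂ) * ζ - 1)) := by
    field_simp
    linear_combination ((α:ℂ) - 1 - (cc α : ℂ) * (α:ℂ) * ζ) * hc2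
  have e4ω : (ω - (cc α : ℂ)) / ((cc α : ℂ) * ω - 1) - (α : ℂ) / (cc α : ℂ)
      = (1 - (α : ℂ)) * (ω - (α : ℂ) * (cc α : ℂ)) / ((cc α : ℂ) * ω - 1) := by
    field_simp
    linear_combination (-1 : ℂ) * hc2
  have e4ζ : (ζ - (cc α : ℂ)) / ((cc α : ℂ) * ζ - 1) - (α : ℂ) / (cc α : ℂ)
      = (1 - (α : ℂ)) * (ζ - (α : ℂ) * (cc α : ℂ)) / ((cc α : ℂ) * ζ - 1) := by
    field_simp
    linear_combination (-1 : ℂ) * hc2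
  have kq : qfun α ω ζ
      = ζ * (ω - (cc α : ℂ)) * ((cc α : ℂ) * ω - 1)
        / (ω * (ζ - (cc α : ℂ)) * ((cc α : ℂ) * ζ - 1)) := by
    unfold qfun
    rw [div_eq_div_iff (by apply_rules [mul_ne_zero]) (by apply_rules [mul_ne_zero])]
    linear_combination (ζ * ω * (ω - (cc α : ℂ)) * (ζ - (cc α : ℂ)) * (ω - ζ)) *
      (mul_inv_cancel₀ hc0)
  have key1 : qfun α (star α ω) (star α ζ)
      = ω * (ζ - (cc α : ℂ)) * ((cc α : ℂ) * ζ - 1)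
        / (ζ * (ω - (cc α : ℂ)) * ((cc α : ℂ) * ω - 1)) := by
    unfold qfun
    rw [sω, sζ, e1ω, e2ω, e1ζ, e2ζ, div_mul_div_comm, div_mul_div_comm,
      div_mul_div_comm, div_mul_div_comm, div_div_eq_mul_div, div_mul_eq_mul_div, div_div,
      div_eq_div_iff (by apply_rules [mul_ne_zero]) (by apply_rules [mul_ne_zero])]
    ring
  have key2 : qtil α (star α ω) (star α ζ)
      = (ω - (cc α : ℂ)) * (ζ - (α : ℂ) / (cc α : ℂ)) * (ζ - (α : ℂ) * (cc α : ℂ))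
          * ((cc α : ℂ) * ω - 1)
        / ((ζ - (cc α : ℂ)) * (ω - (α : ℂ) / (cc α : ℂ)) * (ω - (α : ℂ) * (cc α : ℂ))
          * ((cc α : ℂ) * ζ - 1)) := by
    unfold qtil
    rw [sω, sζ, e3ω, e4ω, e3ζ, e4ζ, div_mul_div_comm, div_mul_div_comm,
      div_mul_div_comm, div_mul_div_comm, div_div_eq_mul_div, div_mul_eq_mul_div, div_div,
      div_eq_div_iff (by apply_rules [mul_ne_zero]) (by apply_rules [mul_ne_zero])]
    ring
  constructor
  · rw [key1, kq, div_mul_div_comm,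
      div_eq_one_iff_eq (by apply_rules [mul_ne_zero])]
    ring
  · rw [key2, kq]
    unfold qtil
    rw [div_mul_div_comm,
      div_eq_div_iff (by apply_rules [mul_ne_zero]) (by apply_rules [mul_ne_zero])]
    ring
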